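/- Let n ≥ 2 be a natural number, c ≠ 0 a real constant, and set α₊ = (n − 1 + √((n−1)(n+3)))/2. Then the function f : (0, ∞) → ℝ, f(y) = y^{α₊}, satisfies the Euler equation y²·f''(y) − (n−2)·y·f'(y) − (n−1)·f(y) = 0 for all y > 0, but does NOT satisfy the fourth-order equation y⁴·f''''(y) + (8−2n)·y³·f'''(y) + (n−8)(n−2)·y²·f''(y) + (n−2)(3n−4)·y·f'(y) + (n−1)²·f(y) = −2c²(n−1)²·f(y)³ for all y > 0; that is, there exists y > 0 at which this fourth-order equation fails. -/

import Mathlib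

open Real Filter

lemma rpow_iter (p : ℝ) (k : ℕ) :
    ∀ y : ℝ, 0 < y → iteratedDeriv k (fun x : ℝ => x ^ p) y =
      (∏ i ∈ Finset.range k, (p - i)) * y ^ (p - k) := by
  induction k with
  | zero => intro y hy; simp
  | succ k ih =>
    intro y hy
    rw [iteratedDeriv_succ]
    have hev : iteratedDeriv k (fun x : ℝ => x ^ p) =ᶠ[nhds y]
        fun x => (∏ i ∈ Finset.range k, (p - i)) * x ^ (p - k) := by
      filter_upwards [isOpen_Ioi.mem_nhds hy] with x hx
      exact ih x hx
    rw [hev.deriv_eq, deriv_const_mul _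
      ((Real.hasDerivAt_rpow_const (Or.inl hy.ne')).differentiableAt),
      Real.deriv_rpow_const y (p - k), Finset.prod_range_succ]
    push_cast
    rw [show p - ((k : ℝ) + 1) = p - (k : ℝ) - 1 by ring]
    ring

theorem stmt_17 (n : ℕ) (hn : 2 ≤ n) (c : ℝ) (hc : c ≠ 0) (f : ℝ → ℝ)
    (hf : f = fun y : ℝ =>
      y ^ (((n : ℝ) - 1 + Real.sqrt (((n : ℝ) - 1) * ((n : ℝ) + 3))) / 2)) :
    (∀ y : ℝ, 0 < y →
        y ^ 2 * iteratedDeriv 2 f y - ((n : ℝ) - 2) * y * deriv f y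
          - ((n : ℝ) - 1) * f y = 0) ∧
    (∃ y : ℝ, 0 < y ∧
        y ^ 4 * iteratedDeriv 4 f y + (8 - 2 * (n : ℝ)) * y ^ 3 * iteratedDeriv 3 f y
          + ((n : ℝ) - 8) * ((n : ℝ) - 2) * y ^ 2 * iteratedDeriv 2 f y
          + ((n : ℝ) - 2) * (3 * (n : ℝ) - 4) * y * deriv f y
          + ((n : ℝ) - 1) ^ 2 * f y
          ≠ -2 * c ^ 2 * ((n : ℝ) - 1) ^ 2 * (f y) ^ 3) := by
  set s := Real.sqrt (((n : ℝ) - 1) * ((n : ℝ) + 3)) with hs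
  set a := (((n : ℝ) - 1) + s) / 2 with ha
  have hn1 : (1 : ℝ) ≤ (n : ℝ) - 1 := by
    have : (2 : ℝ) ≤ n := by exact_mod_cast hn
    linarith
  have hs2 : s ^ 2 = ((n : ℝ) - 1) * ((n : ℝ) + 3) :=
    Real.sq_sqrt (by nlinarith)
  have hquad : a ^ 2 - ((n : ℝ) - 1) * a - ((n : ℝ) - 1) = 0 := by
    rw [ha]; linear_combination (1/4 : ℝ) * hs2
  have hd : ∀ k : ℕ, ∀ y : ℝ, 0 < y →
      iteratedDeriv k f y = (∏ i ∈ Finset.range k, (a - i)) * y ^ (a - k) := by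
    intro k y hy; rw [hf]; exact rpow_iter a k y hy
  have hd1 : ∀ y : ℝ, 0 < y → deriv f y = a * y ^ (a - 1) := by
    intro y hy
    have := hd 1 y hy
    simpa using this
  have hpow : ∀ (y : ℝ), 0 < y → ∀ (k : ℕ), y ^ k * y ^ (a - k) = y ^ a := by
    intro y hy k
    rw [← Real.rpow_natCast y k, ← Real.rpow_add hy]
    ring_nf
  constructor
  · intro y hy
    rw [hd 2 y hy, hd1 y hy, hf]
    have h2 := hpow y hy 2
    have h1 := hpow y hy 1
    push_cast at h2 h1 ⊢
    simp only [Finset.prod_range_succ, Finset.prod_range_zero]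
    push_cast
    linear_combination a * (a - 1) * h2 - ((n : ℝ) - 2) * a * h1 + (y ^ a) * hquad
  · refine ⟨1, one_pos, ?_⟩
    rw [hd 4 1 one_pos, hd 3 1 one_pos, hd 2 1 one_pos, hd1 1 one_pos, hf]
    simp only [Finset.prod_range_succ, Finset.prod_range_zero, Real.one_rpow,
      one_pow, mul_one, one_mul]
    push_cast
    have hL : 1 * (a - 0) * (a - 1) * (a - 2) * (a - 3)
        + (8 - 2 * (n : ℝ)) * (1 * (a - 0) * (a - 1) * (a - 2))
        + ((n : ℝ) - 8) * ((n : ℝ) - 2) * (1 * (a - 0) * (a - 1))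
        + ((n : ℝ) - 2) * (3 * (n : ℝ) - 4) * a + ((n : ℝ) - 1) ^ 2 = 0 := by
      linear_combination (a ^ 2 - ((n : ℝ) - 1) * a - ((n : ℝ) - 1)) * hquad
        + (((n : ℝ) - 1) * a + ((n : ℝ) - 1) - ((n : ℝ) - 1) * a - ((n : ℝ) - 1)) * hquad
    intro hcontra
    have hc2 : (0 : ℝ) < c ^ 2 := by positivity
    have hpos : (0 : ℝ) < c ^ 2 * ((n : ℝ) - 1) ^ 2 :=
      mul_pos hc2 (pow_pos (by linarith) 2)
    have hEq : -2 * c ^ 2 * ((n : ℝ) - 1) ^ 2 * 1 = 0 := by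
      linear_combination hL - hcontra
    nlinarith [hEq, hpos]
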